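/- For positive definite matrices Z₁, Z₂ ∈ ℝ^{n×n} and any B ∈ ℝ^{n×m}: Z₁ ⪰ Z₂ if and only if Z₁(I + BBᵀZ₁)⁻¹ ⪰ Z₂(I + BBᵀZ₂)⁻¹. -/

import Mathlib

open Matrix

lemma conj_posDef {n : ℕ} {S A : Matrix (Fin n) (Fin n) ℝ} (hA : A.PosDef)
    (hS : S.IsHermitian) (hSu : IsUnit S.det) : (S * A * S).PosDef := by
  have herm : (S * A * S).IsHermitian := by
    have := isHermitian_mul_mul_conjTranspose S hA.isHermitian
    rwa [hS.eq] at this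
  refine PosDef.of_dotProduct_mulVec_pos herm (fun x hx => ?_)
  have hy : S *ᵥ x ≠ 0 := by
    intro h
    apply hx
    have := congrArg (S⁻¹ *ᵥ ·) h
    simpa [mulVec_mulVec, nonsing_inv_mul _ hSu] using this
  have := hA.dotProduct_mulVec_pos hy
  rwa [star_mulVec, hS.eq, ← dotProduct_mulVec, mulVec_mulVec, mulVec_mulVec] at this

lemma conj_one {n : ℕ} {S P : Matrix (Fin n) (Fin n) ℝ} (hSS : S * S = P⁻¹)
    (hSu : IsUnit S.det) (hPu : IsUnit P.det) : S * P * S = 1 := by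
  have hP : P = S⁻¹ * S⁻¹ := by
    rw [← Matrix.mul_inv_rev, hSS, nonsing_inv_nonsing_inv _ hPu]
  rw [hP, ← mul_assoc S S⁻¹ S⁻¹, mul_nonsing_inv _ hSu, one_mul, nonsing_inv_mul _ hSu]

section sqrtfacts
variable {n : ℕ} {P : Matrix (Fin n) (Fin n) ℝ} (hP : P.PosDef)
open scoped MatrixOrder

noncomputable def isqrt : Matrix (Fin n) (Fin n) ℝ := have _ := hP; CFC.sqrt P⁻¹

lemma isqrt_mul_self : isqrt hP * isqrt hP = P⁻¹ :=
  show CFC.sqrt P⁻¹ * CFC.sqrt P⁻¹ = P⁻¹ from CFC.sqrt_mul_sqrt_self _ hP.inv.posSemidef.nonneg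

lemma isqrt_herm : (isqrt hP).IsHermitian :=
  show (CFC.sqrt P⁻¹).IsHermitian from (CFC.sqrt_nonneg _).posSemidef.isHermitian

lemma isqrt_isUnit : IsUnit (isqrt hP).det := by
  have h1 : IsUnit (P⁻¹).det := hP.inv.det_pos.ne'.isUnit
  rw [← isqrt_mul_self hP, det_mul] at h1
  exact isUnit_of_mul_isUnit_left h1

lemma isqrt_conj_self : isqrt hP * P * isqrt hP = 1 :=
  conj_one (isqrt_mul_self hP) (isqrt_isUnit hP) hP.det_pos.ne'.isUnit

end sqrtfacts

lemma one_sub_inv {n : ℕ} {P : Matrix (Fin n) (Fin n) ℝ} (hP : P.PosDef)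
    (h : (P - 1).PosSemidef) : (1 - P⁻¹).PosSemidef := by
  have hc := h.mul_mul_conjTranspose_same (isqrt hP)
  rw [(isqrt_herm hP).eq] at hc
  have : isqrt hP * (P - 1) * isqrt hP = 1 - P⁻¹ := by
    rw [mul_sub, sub_mul, isqrt_conj_self hP, mul_one, isqrt_mul_self hP]
  rwa [this] at hc

lemma matInvSubInv {n : ℕ} {A B : Matrix (Fin n) (Fin n) ℝ} (hA : A.PosDef) (hB : B.PosDef)
    (h : (A - B).PosSemidef) : (B⁻¹ - A⁻¹).PosSemidef := by
  set S := isqrt hB with hSdef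
  have hSh := isqrt_herm hB
  have hSu := isqrt_isUnit hB
  have hM : (S * A * S).PosDef := conj_posDef hA hSh hSu
  have h1 : (S * A * S - 1).PosSemidef := by
    have hc := h.mul_mul_conjTranspose_same S
    rw [hSh.eq] at hc
    have : S * (A - B) * S = S * A * S - 1 := by
      rw [mul_sub, sub_mul, isqrt_conj_self hB]
    rwa [this] at hc
  have h2 := one_sub_inv hM h1
  have hc2 := h2.mul_mul_conjTranspose_same S
  rw [hSh.eq] at hc2
  have key : S * (1 - (S * A * S)⁻¹) * S = B⁻¹ - A⁻¹ := by
    rw [mul_sub, sub_mul, mul_one, isqrt_mul_self hB, Matrix.mul_inv_rev, Matrix.mul_inv_rev]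
    congr 1
    rw [← mul_assoc, ← mul_assoc, mul_assoc _ _ S, nonsing_inv_mul _ hSu, mul_one,
      mul_assoc S, ← mul_assoc S, mul_nonsing_inv _ hSu, one_mul]
  rwa [key] at hc2

lemma key_eq {n : ℕ} {Z W : Matrix (Fin n) (Fin n) ℝ} (hZ : Z.PosDef) :
    Z * (1 + W * Z)⁻¹ = (Z⁻¹ + W)⁻¹ := by
  have hZu := hZ.det_pos.ne'.isUnit
  have h1 : 1 + W * Z = (Z⁻¹ + W) * Z := by
    rw [add_mul, nonsing_inv_mul _ hZu]
  rw [h1, Matrix.mul_inv_rev, ← mul_assoc, mul_nonsing_inv _ hZu, one_mul]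

theorem stmt_4 {n m : ℕ}
    (B : Matrix (Fin n) (Fin m) ℝ)
    (Z₁ Z₂ : Matrix (Fin n) (Fin n) ℝ)
    (hZ₁ : Z₁.PosDef) (hZ₂ : Z₂.PosDef) :
    (Z₁ - Z₂).PosSemidef ↔
      (Z₁ * (1 + B * Bᵀ * Z₁)⁻¹ - Z₂ * (1 + B * Bᵀ * Z₂)⁻¹).PosSemidef := by
  have hW : (B * Bᵀ).PosSemidef := by
    have := Matrix.posSemidef_self_mul_conjTranspose B
    rwa [conjTranspose_eq_transpose_of_trivial] at this
  have hP₁ : (Z₁⁻¹ + B * Bᵀ).PosDef := hZ₁.inv.add_posSemidef hW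
  have hP₂ : (Z₂⁻¹ + B * Bᵀ).PosDef := hZ₂.inv.add_posSemidef hW
  rw [key_eq hZ₁, key_eq hZ₂]
  constructor
  · intro h
    have h1 : (Z₂⁻¹ - Z₁⁻¹).PosSemidef := matInvSubInv hZ₁ hZ₂ h
    have h2 : ((Z₂⁻¹ + B * Bᵀ) - (Z₁⁻¹ + B * Bᵀ)).PosSemidef := by
      simpa using h1
    simpa using matInvSubInv hP₂ hP₁ h2
  · intro h
    have h1 := matInvSubInv hP₁.inv hP₂.inv h
    rw [nonsing_inv_nonsing_inv _ (hP₁.det_pos.ne'.isUnit),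
      nonsing_inv_nonsing_inv _ (hP₂.det_pos.ne'.isUnit)] at h1
    have h2 : (Z₂⁻¹ - Z₁⁻¹).PosSemidef := by
      have he : (Z₂⁻¹ + B * Bᵀ) - (Z₁⁻¹ + B * Bᵀ) = Z₂⁻¹ - Z₁⁻¹ := by abel
      rwa [he] at h1
    have h3 := matInvSubInv hZ₂.inv hZ₁.inv h2
    rwa [nonsing_inv_nonsing_inv _ (hZ₁.det_pos.ne'.isUnit),
      nonsing_inv_nonsing_inv _ (hZ₂.det_pos.ne'.isUnit)] at h3
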